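/- Every weakly reversible reaction graph is endotactic. -/
import Mathlib


open Matrix Finset
open scoped Matrix Classical

abbrev Vec (d : ℕ) := Fin d → ℝ
abbrev Edge (d : ℕ) := Vec d × Vec d

/-- Sources of edges whose reaction vector is not orthogonal to `u`. -/
def srcU {d : ℕ} (E : Finset (Edge d)) (u : Vec d) : Set (Vec d) :=
  {y | ∃ y', (y, y') ∈ E ∧ (y' - y) ⬝ᵥ u ≠ 0}

/-- `G` is `u`-endotactic: no `u`-endotacticity violating reaction. -/
def uEndotactic {d : ℕ} (E : Finset (Edge d)) (u : Vec d) : Prop :=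
  ¬ ∃ y y', (y, y') ∈ E ∧ 0 < (y' - y) ⬝ᵥ u ∧ ∀ z ∈ srcU E u, z ⬝ᵥ u ≤ y ⬝ᵥ u

def Endotactic {d : ℕ} (E : Finset (Edge d)) : Prop := ∀ u : Vec d, uEndotactic E u

/-- Reachability by a directed path. -/
def Reach {d : ℕ} (E : Finset (Edge d)) : Vec d → Vec d → Prop :=
  Relation.ReflTransGen (fun a b => (a, b) ∈ E)

def IsEig {d : ℕ} (A : Matrix (Fin d) (Fin d) ℝ) (μ : ℂ) : Prop :=
  ∃ v : Fin d → ℂ, v ≠ 0 ∧ (A.map Complex.ofReal).mulVec v = μ • v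

/-- Every weakly reversible reaction graph is endotactic. -/
theorem stmt9 {d : ℕ} (E : Finset (Edge d)) (hsimple : ∀ e ∈ E, e.1 ≠ e.2)
    (hwr : ∀ e ∈ E, Reach E e.2 e.1) :
    Endotactic E := by
  intro u
  rintro ⟨y, y', hE, hpos, hmax⟩
  have hgt : y ⬝ᵥ u < y' ⬝ᵥ u := by
    rw [sub_dotProduct] at hpos; linarith
  suffices H : ∀ a, Reach E a y → y ⬝ᵥ u < a ⬝ᵥ u → False from
    H y' (hwr _ hE) hgt
  intro a hreach
  induction hreach using Relation.ReflTransGen.head_induction_on with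
  | refl => exact fun h => lt_irrefl _ h
  | @head a b hab hbc ih =>
    intro hlt
    by_cases h0 : (b - a) ⬝ᵥ u = 0
    · apply ih
      rw [sub_dotProduct, sub_eq_zero] at h0
      linarith
    · exact absurd (hmax a ⟨b, hab, h0⟩) (not_le.mpr hlt)
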